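/- Let m ∈ (0,4], α > 0, and let f : [0,∞) → ℝ be four-times continuously differentiable with f(y) > 0 for all y ≥ 0 and f(0) = 1, satisfying the self-similar profile equation α·(f − y f') + m f^{m−1} f' f''' + f^m f'''' = 0 on (0,∞). If at some y₀ > 0 the Σ₊ condition holds (y₀·f'(y₀) > f(y₀), f''(y₀) > 0, f'''(y₀) > 0), then there exists c > 0 such that f(y) ≥ c·y² for all y ∈ (0,∞). -/

import Mathlib

open Set Filter Topology MeasureTheory

noncomputable section

/-- `f` is four-times continuously differentiable on `s`, with successive
derivatives `f1`, `f2`, `f3`, `f4`. -/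
def C4On (s : Set ℝ) (f f1 f2 f3 f4 : ℝ → ℝ) : Prop :=
  (∀ y ∈ s, HasDerivWithinAt f (f1 y) s y) ∧
  (∀ y ∈ s, HasDerivWithinAt f1 (f2 y) s y) ∧
  (∀ y ∈ s, HasDerivWithinAt f2 (f3 y) s y) ∧
  (∀ y ∈ s, HasDerivWithinAt f3 (f4 y) s y) ∧
  ContinuousOn f4 s

/-- The self-similar profile ODE
`α (f − y f') + m f^(m−1) f' f''' + f^m f'''' = 0` on the set `s`,
for a function `f` with successive derivatives `f1`, `f3`, `f4`. -/
def ProfileODE (m α : ℝ) (s : Set ℝ) (f f1 f3 f4 : ℝ → ℝ) : Prop :=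
  ∀ y ∈ s,
    α * (f y - y * f1 y) + m * f y ^ (m - 1) * f1 y * f3 y + f y ^ m * f4 y = 0

/-- Monotonicity on `Icc` from positivity of a given derivative on the interior. -/
lemma aux_mono_Icc {a b : ℝ} {g g' : ℝ → ℝ}
    (hcont : ContinuousOn g (Icc a b))
    (hderiv : ∀ x ∈ Ioo a b, HasDerivAt g (g' x) x)
    (hpos : ∀ x ∈ Ioo a b, 0 < g' x) (hab : a ≤ b) : g a ≤ g b := by
  have hsm : StrictMonoOn g (Icc a b) := by
    apply strictMonoOn_of_deriv_pos (convex_Icc a b) hcont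
    intro x hx
    rw [interior_Icc] at hx
    rw [(hderiv x hx).deriv]
    exact hpos x hx
  exact hsm.monotoneOn (left_mem_Icc.2 hab) (right_mem_Icc.2 hab) hab

/-- Monotonicity on `Ici` from nonnegativity of a given derivative on the interior. -/
lemma aux_mono_Ici {a : ℝ} {g g' : ℝ → ℝ}
    (hcont : ContinuousOn g (Ici a))
    (hderiv : ∀ x ∈ Ioi a, HasDerivAt g (g' x) x)
    (hpos : ∀ x ∈ Ioi a, 0 ≤ g' x) : ∀ y, a ≤ y → g a ≤ g y := by
  have hsm : MonotoneOn g (Ici a) := by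
    apply monotoneOn_of_deriv_nonneg (convex_Ici a) hcont
    · intro x hx
      rw [interior_Ici] at hx
      exact (hderiv x hx).differentiableAt.differentiableWithinAt
    · intro x hx
      rw [interior_Ici] at hx
      rw [(hderiv x hx).deriv]
      exact hpos x hx
  intro y hy
  exact hsm self_mem_Ici hy hy

theorem stmt4 (m α : ℝ) (hm0 : 0 < m) (hm4 : m ≤ 4) (hα : 0 < α)
    (f f1 f2 f3 f4 : ℝ → ℝ)
    (hC4 : C4On (Ici 0) f f1 f2 f3 f4)
    (hpos : ∀ y ∈ Ici (0 : ℝ), 0 < f y)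
    (hf0 : f 0 = 1)
    (hODE : ProfileODE m α (Ioi 0) f f1 f3 f4)
    (y₀ : ℝ) (hy₀ : 0 < y₀)
    (hSigmaPlus : f y₀ < y₀ * f1 y₀ ∧ 0 < f2 y₀ ∧ 0 < f3 y₀) :
    ∃ c > (0 : ℝ), ∀ y > (0 : ℝ), c * y ^ 2 ≤ f y := by
  obtain ⟨hd1, hd2, hd3, hd4, hc4⟩ := hC4
  obtain ⟨hS1, hS2, hS3⟩ := hSigmaPlus
  -- genuine derivatives at interior points
  have Hf : ∀ y : ℝ, 0 < y → HasDerivAt f (f1 y) y := fun y hy =>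
    (hd1 y hy.le).hasDerivAt (Ici_mem_nhds hy)
  have Hf1 : ∀ y : ℝ, 0 < y → HasDerivAt f1 (f2 y) y := fun y hy =>
    (hd2 y hy.le).hasDerivAt (Ici_mem_nhds hy)
  have Hf2 : ∀ y : ℝ, 0 < y → HasDerivAt f2 (f3 y) y := fun y hy =>
    (hd3 y hy.le).hasDerivAt (Ici_mem_nhds hy)
  have Hf3 : ∀ y : ℝ, 0 < y → HasDerivAt f3 (f4 y) y := fun y hy =>
    (hd4 y hy.le).hasDerivAt (Ici_mem_nhds hy)
  -- continuity at interior points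
  have Cf : ∀ y : ℝ, 0 < y → ContinuousAt f y := fun y hy => (Hf y hy).continuousAt
  have Cf1 : ∀ y : ℝ, 0 < y → ContinuousAt f1 y := fun y hy => (Hf1 y hy).continuousAt
  have Cf2 : ∀ y : ℝ, 0 < y → ContinuousAt f2 y := fun y hy => (Hf2 y hy).continuousAt
  have Cf3 : ∀ y : ℝ, 0 < y → ContinuousAt f3 y := fun y hy => (Hf3 y hy).continuousAt
  -- derivative of g = f^m * f3
  have Hg : ∀ y : ℝ, 0 < y →
      HasDerivAt (fun t => f t ^ m * f3 t) (α * (y * f1 y - f y)) y := by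
    intro y hy
    have h1 : HasDerivAt (fun t => f t ^ m) (f1 y * m * f y ^ (m - 1)) y :=
      (Hf y hy).rpow_const (Or.inl (hpos y hy.le).ne')
    have h2 := h1.mul (Hf3 y hy)
    refine h2.congr_deriv ?_
    have hOD := hODE y hy
    linear_combination hOD
  -- the Σ₊ condition propagates
  have key : ∀ y, y₀ ≤ y → f y < y * f1 y ∧ 0 < f2 y ∧ 0 < f3 y := by
    by_contra hcon
    push_neg at hcon
    obtain ⟨z, hz, h1z⟩ := hcon
    have hPz : ¬(f z < z * f1 z ∧ 0 < f2 z ∧ 0 < f3 z) :=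
      fun h => absurd h.2.2 (not_lt.2 (h1z h.1 h.2.1))
    set B := {y : ℝ | y₀ ≤ y ∧ ¬(f y < y * f1 y ∧ 0 < f2 y ∧ 0 < f3 y)} with hB
    have hBne : B.Nonempty := ⟨z, hz, hPz⟩
    have hBbd : BddBelow B := ⟨y₀, fun x hx => hx.1⟩
    set T := sInf B with hT
    have hTy₀ : y₀ ≤ T := le_csInf hBne fun x hx => hx.1
    have hTpos : 0 < T := lt_of_lt_of_le hy₀ hTy₀
    -- all points in [y₀, T) satisfy Σ₊
    have hPlt : ∀ t, y₀ ≤ t → t < T → f t < t * f1 t ∧ 0 < f2 t ∧ 0 < f3 t := by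
      intro t ht htT
      by_contra hPt
      exact absurd (csInf_le hBbd ⟨ht, hPt⟩) (not_le.2 htT)
    -- prove Σ₊ at T via monotonicity on [y₀, T]
    have hposIoo : ∀ x, x ∈ Ioo y₀ T → 0 < x := fun x hx => lt_trans hy₀ hx.1
    have hccIcc : ∀ x, x ∈ Icc y₀ T → 0 < x := fun x hx => lt_of_lt_of_le hy₀ hx.1
    -- f3 T > 0
    have hgmono : f y₀ ^ m * f3 y₀ ≤ f T ^ m * f3 T := by
      have := aux_mono_Icc (g := fun t => f t ^ m * f3 t)
        (g' := fun x => α * (x * f1 x - f x)) ?_ ?_ ?_ hTy₀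
      · simpa using this
      · intro x hx
        exact ((Cf x (hccIcc x hx)).rpow_const (Or.inl (hpos x (hccIcc x hx).le).ne')).mul
          (Cf3 x (hccIcc x hx)) |>.continuousWithinAt
      · intro x hx; exact Hg x (hposIoo x hx)
      · intro x hx
        have h1 := (hPlt x hx.1.le hx.2).1
        show (0:ℝ) < α * (x * f1 x - f x)
        nlinarith
    have hf3T : 0 < f3 T := by
      have h1 : 0 < f y₀ ^ m := Real.rpow_pos_of_pos (hpos y₀ hy₀.le) m
      have h2 : 0 < f T ^ m := Real.rpow_pos_of_pos (hpos T hTpos.le) m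
      nlinarith
    -- f2 T > 0
    have hf2mono : f2 y₀ ≤ f2 T := by
      have := aux_mono_Icc (g := f2) (g' := f3) ?_ ?_ ?_ hTy₀
      · exact this
      · intro x hx; exact (Cf2 x (hccIcc x hx)).continuousWithinAt
      · intro x hx; exact Hf2 x (hposIoo x hx)
      · intro x hx; exact (hPlt x hx.1.le hx.2).2.2
    have hf2T : 0 < f2 T := lt_of_lt_of_le hS2 hf2mono
    -- y f1 - f at T
    have hhmono : y₀ * f1 y₀ - f y₀ ≤ T * f1 T - f T := by
      have := aux_mono_Icc (g := fun t => t * f1 t - f t)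
        (g' := fun x => x * f2 x) ?_ ?_ ?_ hTy₀
      · simpa using this
      · intro x hx
        exact ((continuousAt_id.mul (Cf1 x (hccIcc x hx))).sub
          (Cf x (hccIcc x hx))).continuousWithinAt
      · intro x hx
        have h := ((hasDerivAt_id x).mul (Hf1 x (hposIoo x hx))).sub (Hf x (hposIoo x hx))
        refine h.congr_deriv ?_
        simp only [id_eq]
        ring
      · intro x hx
        exact mul_pos (hposIoo x hx) (hPlt x hx.1.le hx.2).2.1
    have hf1T : f T < T * f1 T := by linarith
    -- T satisfies Σ₊, hence on a neighborhood, contradicting T = sInf B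
    have hopen : ∀ᶠ t in 𝓝 T, f t < t * f1 t ∧ 0 < f2 t ∧ 0 < f3 t := by
      have e1 : ∀ᶠ t in 𝓝 T, f t < t * f1 t := by
        have hca : ContinuousAt (fun t => t * f1 t - f t) T :=
          (continuousAt_id.mul (Cf1 T hTpos)).sub (Cf T hTpos)
        have h0 : (0:ℝ) < T * f1 T - f T := by linarith
        have h := hca.eventually (eventually_gt_nhds h0)
        filter_upwards [h] with t ht
        linarith
      have e2 : ∀ᶠ t in 𝓝 T, 0 < f2 t := (Cf2 T hTpos).eventually (eventually_gt_nhds hf2T)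
      have e3 : ∀ᶠ t in 𝓝 T, 0 < f3 t := (Cf3 T hTpos).eventually (eventually_gt_nhds hf3T)
      filter_upwards [e1, e2, e3] with t h1 h2 h3 using ⟨h1, h2, h3⟩
    obtain ⟨ε, hε, hball⟩ := Metric.eventually_nhds_iff_ball.1 hopen
    have hlb : T + ε ≤ T := by
      apply le_csInf hBne
      intro x hx
      by_contra hxlt
      push_neg at hxlt
      have hxT : T ≤ x := csInf_le hBbd hx
      have : x ∈ Metric.ball T ε := by
        rw [Metric.mem_ball, Real.dist_eq, abs_lt]
        constructor <;> linarith
      exact hx.2 (hball x this)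
    linarith
  -- lower bound f2 ≥ b := f2 y₀ on [y₀, ∞)
  set b := f2 y₀ with hb
  have hbpos : 0 < b := hS2
  have hf2ge : ∀ y, y₀ ≤ y → b ≤ f2 y := by
    have := aux_mono_Ici (a := y₀) (g := f2) (g' := f3) ?_ ?_ ?_
    · exact this
    · intro x hx; exact (Cf2 x (lt_of_lt_of_le hy₀ hx)).continuousWithinAt
    · intro x hx; exact Hf2 x (lt_trans hy₀ hx)
    · intro x hx; exact (key x (le_of_lt hx)).2.2.le
  -- f1 y ≥ f1 y₀ + derivative bound: use ψ = f1 - b*(id - y₀)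
  have hf1y₀pos : 0 < f1 y₀ := by
    have := hpos y₀ hy₀.le
    nlinarith [hS1]
  have hψ : ∀ y, y₀ ≤ y → f1 y₀ ≤ f1 y - b * (y - y₀) := by
    have h := aux_mono_Ici (a := y₀) (g := fun y => f1 y - b * (y - y₀))
      (g' := fun y => f2 y - b) ?_ ?_ ?_
    · intro y hy
      have := h y hy
      simpa using this
    · intro x hx
      exact ((Cf1 x (lt_of_lt_of_le hy₀ hx)).sub
        (continuousAt_const.mul (continuousAt_id.sub continuousAt_const))).continuousWithinAt
    · intro x hx
      have h1 := Hf1 x (lt_trans hy₀ hx)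
      have h2 : HasDerivAt (fun y : ℝ => b * (y - y₀)) b x := by
        have := ((hasDerivAt_id x).sub_const y₀).const_mul b
        simpa using this
      exact h1.sub h2
    · intro x hx
      have := hf2ge x (le_of_lt hx)
      show (0:ℝ) ≤ f2 x - b
      linarith
  -- φ = f - b/2 (y - y₀)^2 is monotone on [y₀, ∞)
  have hφ : ∀ y, y₀ ≤ y → f y₀ ≤ f y - b / 2 * (y - y₀) ^ 2 := by
    have h := aux_mono_Ici (a := y₀) (g := fun y => f y - b / 2 * (y - y₀) ^ 2)
      (g' := fun y => f1 y - b * (y - y₀)) ?_ ?_ ?_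
    · intro y hy
      have := h y hy
      simpa using this
    · intro x hx
      have hx0 : 0 < x := lt_of_lt_of_le hy₀ hx
      exact ((Cf x hx0).sub (continuousAt_const.mul
        (((continuousAt_id.sub continuousAt_const)).pow 2))).continuousWithinAt
    · intro x hx
      have h1 := Hf x (lt_trans hy₀ hx)
      have h2 : HasDerivAt (fun y : ℝ => b / 2 * (y - y₀) ^ 2) (b * (x - y₀)) x := by
        have hb2 : HasDerivAt (fun y : ℝ => y - y₀) 1 x := (hasDerivAt_id x).sub_const y₀
        have h3 := (hb2.pow 2).const_mul (b / 2)
        refine h3.congr_deriv ?_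
        push_cast
        ring
      exact h1.sub h2
    · intro x hx
      have := hψ x (le_of_lt hx)
      show (0:ℝ) ≤ f1 x - b * (x - y₀)
      linarith [hf1y₀pos]
  -- quadratic lower bound for y ≥ 2 y₀
  have hquad : ∀ y, 2 * y₀ ≤ y → b / 8 * y ^ 2 ≤ f y := by
    intro y hy
    have h1 := hφ y (by linarith)
    have h2 : y / 2 ≤ y - y₀ := by linarith
    have h3 : (y / 2) ^ 2 ≤ (y - y₀) ^ 2 := by
      apply sq_le_sq' <;> nlinarith
    have := hpos y₀ hy₀.le
    nlinarith
  -- minimum on the compact piece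
  obtain ⟨x₀, hx₀mem, hx₀min⟩ := (isCompact_Icc (a := (0:ℝ)) (b := 2 * y₀)).exists_isMinOn
    (⟨0, by constructor <;> linarith⟩)
    ((fun y hy => (hd1 y hy.1).continuousWithinAt.mono (fun t ht => ht.1)) :
      ContinuousOn f (Icc 0 (2 * y₀)))
  set ε := f x₀ with hε
  have hεpos : 0 < ε := hpos x₀ hx₀mem.1
  refine ⟨min (b / 8) (ε / (4 * y₀ ^ 2)), lt_min (by linarith) (by positivity), ?_⟩
  intro y hy
  rcases le_or_gt y (2 * y₀) with hcase | hcase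
  · have hfy : ε ≤ f y := hx₀min ⟨hy.le, hcase⟩
    have h1 : min (b / 8) (ε / (4 * y₀ ^ 2)) * y ^ 2 ≤ ε / (4 * y₀ ^ 2) * y ^ 2 := by
      apply mul_le_mul_of_nonneg_right (min_le_right _ _) (sq_nonneg y)
    have h2 : ε / (4 * y₀ ^ 2) * y ^ 2 ≤ ε := by
      rw [div_mul_eq_mul_div, div_le_iff₀ (by positivity)]
      have hy2 : y ^ 2 ≤ 4 * y₀ ^ 2 := by nlinarith
      nlinarith
    linarith
  · have h1 : min (b / 8) (ε / (4 * y₀ ^ 2)) * y ^ 2 ≤ b / 8 * y ^ 2 := by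
      apply mul_le_mul_of_nonneg_right (min_le_left _ _) (sq_nonneg y)
    have h2 := hquad y hcase.le
    linarith
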